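/- Let c > 0, E = diag(1, 1, 1/c²) and E^{1/2} = diag(1, 1, 1/c) on ℝ^3, let r ≥ 0, and let a, b ∈ ℝ^3 be such that the segment [a, b] is disjoint from the ellipsoid C = {p : ⟨p, E p⟩ ≤ r²}. Let p̃ be a point of the transformed segment [E^{1/2}a, E^{1/2}b] minimizing the distance to the origin, and set ñ = p̃/‖p̃‖. Then the set R = {x ∈ ℝ^3 : ⟨E^{1/2}x, ñ⟩ − r > 0} is a convex set satisfying both: (i) R ∩ C = ∅, and (ii) [a, b] ⊆ R. (That is, R satisfies the definition of a relative safe flight corridor.) -/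

import Mathlib

open scoped RealInnerProductSpace

set_option maxHeartbeats 1000000

/-- Construction of the relative safe flight corridor: if the segment `[a, b]` avoids the
ellipsoidal inter-collision model `C = {p : ⟨p, Ep⟩ ≤ r²}`, and `p̃` is a closest point to the
origin on the transformed segment `[E^{1/2}a, E^{1/2}b]` with `ñ = p̃/‖p̃‖`, then
`R = {x : ⟨E^{1/2}x, ñ⟩ - r > 0}` is convex, disjoint from `C`, and contains `[a, b]`. -/
theorem rsfc_construction (c : ℝ) (hc : 0 < c)
    (E Ehalf : EuclideanSpace ℝ (Fin 3) →ₗ[ℝ] EuclideanSpace ℝ (Fin 3))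
    (hE : ∀ (x : EuclideanSpace ℝ (Fin 3)) (i : Fin 3),
      E x i = if i = 2 then x i / c ^ 2 else x i)
    (hEhalf : ∀ (x : EuclideanSpace ℝ (Fin 3)) (i : Fin 3),
      Ehalf x i = if i = 2 then x i / c else x i)
    (r : ℝ) (hr : 0 ≤ r)
    (a b : EuclideanSpace ℝ (Fin 3))
    (hab : Disjoint (segment ℝ a b) {p : EuclideanSpace ℝ (Fin 3) | ⟪p, E p⟫ ≤ r ^ 2})
    (ptil : EuclideanSpace ℝ (Fin 3))
    (hptil : ptil ∈ segment ℝ (Ehalf a) (Ehalf b))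
    (hmin : ∀ x ∈ segment ℝ (Ehalf a) (Ehalf b), ‖ptil‖ ≤ ‖x‖) :
    Convex ℝ {x : EuclideanSpace ℝ (Fin 3) | 0 < ⟪Ehalf x, ‖ptil‖⁻¹ • ptil⟫ - r} ∧
    Disjoint {x : EuclideanSpace ℝ (Fin 3) | 0 < ⟪Ehalf x, ‖ptil‖⁻¹ • ptil⟫ - r}
      {p : EuclideanSpace ℝ (Fin 3) | ⟪p, E p⟫ ≤ r ^ 2} ∧
    segment ℝ a b ⊆ {x : EuclideanSpace ℝ (Fin 3) | 0 < ⟪Ehalf x, ‖ptil‖⁻¹ • ptil⟫ - r} := by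
  have hc' : (c : ℝ) ≠ 0 := ne_of_gt hc
  have hkey : ∀ p : EuclideanSpace ℝ (Fin 3), ⟪p, E p⟫ = ‖Ehalf p‖ ^ 2 := by
    intro p
    rw [← real_inner_self_eq_norm_sq]
    have h02 : ((0:Fin 3) = 2) = False := by decide
    have h12 : ((1:Fin 3) = 2) = False := by decide
    have h22 : ((2:Fin 3) = 2) = True := by decide
    simp only [PiLp.inner_apply, RCLike.inner_apply, conj_trivial, Fin.sum_univ_three,
      hE, hEhalf, h02, h12, h22, if_true, if_false]
    field_simp
  have hseg : ∀ q ∈ segment ℝ a b, r < ‖Ehalf q‖ := by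
    intro q hq
    have hq' : ¬ (⟪q, E q⟫ ≤ r ^ 2) := fun h => (Set.disjoint_left.mp hab hq) h
    rw [hkey] at hq'
    push_neg at hq'
    exact lt_of_pow_lt_pow_left₀ 2 (norm_nonneg _) hq'
  have himg : Ehalf '' segment ℝ a b = segment ℝ (Ehalf a) (Ehalf b) :=
    image_segment ℝ Ehalf.toAffineMap a b
  have hptilr : r < ‖ptil‖ := by
    rw [← himg] at hptil
    obtain ⟨q, hq, rfl⟩ := hptil
    exact hseg q hq
  have hnorm0 : (0:ℝ) < ‖ptil‖ := lt_of_le_of_lt hr hptilr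
  have hvar : ∀ w ∈ segment ℝ (Ehalf a) (Ehalf b), ‖ptil‖ ^ 2 ≤ ⟪ptil, w⟫ := by
    have hK : Convex ℝ (segment ℝ (Ehalf a) (Ehalf b)) := convex_segment _ _
    have hinf : ‖(0:EuclideanSpace ℝ (Fin 3)) - ptil‖
        = ⨅ w : segment ℝ (Ehalf a) (Ehalf b), ‖(0:EuclideanSpace ℝ (Fin 3)) - w‖ := by
      haveI : Nonempty (segment ℝ (Ehalf a) (Ehalf b)) := ⟨⟨ptil, hptil⟩⟩
      apply le_antisymm
      · apply le_ciInf
        intro w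
        simp only [zero_sub, norm_neg]
        exact hmin w w.2
      · have hb : BddBelow (Set.range fun w : segment ℝ (Ehalf a) (Ehalf b) =>
            ‖(0:EuclideanSpace ℝ (Fin 3)) - (w:EuclideanSpace ℝ (Fin 3))‖) := by
          refine ⟨0, ?_⟩
          rintro x ⟨w, rfl⟩
          positivity
        exact ciInf_le hb ⟨ptil, hptil⟩
    have h2 := (norm_eq_iInf_iff_real_inner_le_zero hK hptil).mp hinf
    intro w hw
    have h3 : ⟪(0:EuclideanSpace ℝ (Fin 3)) - ptil, w - ptil⟫ ≤ 0 := h2 w hw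
    rw [zero_sub, inner_sub_right, inner_neg_left, inner_neg_left,
      real_inner_self_eq_norm_sq] at h3
    linarith
  refine ⟨?_, ?_, ?_⟩
  · have hset : {x : EuclideanSpace ℝ (Fin 3) | 0 < ⟪Ehalf x, ‖ptil‖⁻¹ • ptil⟫ - r}
        = {x : EuclideanSpace ℝ (Fin 3) | r < ⟪Ehalf x, ‖ptil‖⁻¹ • ptil⟫} := by
      ext x; simp [sub_pos]
    rw [hset]
    apply convex_halfSpace_gt
    constructor
    · intro x y; rw [map_add, inner_add_left]
    · intro t x; rw [map_smul, real_inner_smul_left, smul_eq_mul]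
  · rw [Set.disjoint_left]
    intro x hx hx'
    simp only [Set.mem_setOf_eq] at hx hx'
    rw [hkey] at hx'
    have hxn : ‖Ehalf x‖ ≤ r := by nlinarith [norm_nonneg (Ehalf x)]
    have h1 : ⟪Ehalf x, ‖ptil‖⁻¹ • ptil⟫ ≤ ‖Ehalf x‖ := by
      calc ⟪Ehalf x, ‖ptil‖⁻¹ • ptil⟫ ≤ ‖Ehalf x‖ * ‖‖ptil‖⁻¹ • ptil‖ :=
            real_inner_le_norm _ _
        _ = ‖Ehalf x‖ := by
            rw [norm_smul, norm_inv, norm_norm, inv_mul_cancel₀ (ne_of_gt hnorm0), mul_one]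
    linarith
  · intro q hq
    simp only [Set.mem_setOf_eq]
    have hw : Ehalf q ∈ segment ℝ (Ehalf a) (Ehalf b) := by
      rw [← himg]; exact ⟨q, hq, rfl⟩
    have h1 := hvar (Ehalf q) hw
    have h2 : ⟪Ehalf q, ‖ptil‖⁻¹ • ptil⟫ = ‖ptil‖⁻¹ * ⟪ptil, Ehalf q⟫ := by
      rw [real_inner_smul_right, real_inner_comm]
    have h3 : ‖ptil‖ ≤ ⟪Ehalf q, ‖ptil‖⁻¹ • ptil⟫ := by
      rw [h2]
      have h4 : ‖ptil‖⁻¹ * ‖ptil‖ ^ 2 ≤ ‖ptil‖⁻¹ * ⟪ptil, Ehalf q⟫ :=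
        mul_le_mul_of_nonneg_left h1 (by positivity)
      have h5 : ‖ptil‖⁻¹ * ‖ptil‖ ^ 2 = ‖ptil‖ := by field_simp
      linarith
    linarith
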